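/- Let k ≥ 3 be an integer such that k divides s² − s − 1 for some positive integer s. Then for n = s(k−1) + 2 there exists a K_k-divisible graph G of order n whose complement has exactly n − (k+1)/2 edges and which has no K_k-decomposition. -/

import Mathlib

/-- A graph is `K_k`-divisible if `k(k-1)/2` divides its number of edges and `k-1`
divides every vertex degree. -/
def KkDivisible {V : Type*} (k : ℕ) (G : SimpleGraph V) : Prop :=
  (k * (k - 1) / 2) ∣ G.edgeSet.ncard ∧ ∀ x : V, (k - 1) ∣ (G.neighborSet x).ncard

/-- A `K_k`-decomposition of `G`: a set of `k`-cliques of `G` (i.e. subgraphs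
isomorphic to `K_k`) such that every edge of `G` lies in exactly one of them. -/
def HasKkDecomposition {V : Type*} (k : ℕ) (G : SimpleGraph V) : Prop :=
  ∃ D : Set (Finset V),
    (∀ A ∈ D, A.card = k ∧ ∀ x ∈ A, ∀ y ∈ A, x ≠ y → G.Adj x y) ∧
    (∀ x y : V, G.Adj x y → ∃! A, A ∈ D ∧ x ∈ A ∧ y ∈ A)

open Finset

/-- complement relation on vertex values -/
def badRel (k x y : ℕ) : Prop :=
  (x = 0 ∧ k ≤ y) ∨ (y = 0 ∧ k ≤ x) ∨
  (y = x + 1 ∧ x % 2 = 1 ∧ y ≤ k - 1) ∨ (x = y + 1 ∧ y % 2 = 1 ∧ x ≤ k - 1)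

instance (k x y : ℕ) : Decidable (badRel k x y) := by unfold badRel; infer_instance

lemma badRel_symm {k x y : ℕ} (h : badRel k x y) : badRel k y x := by
  unfold badRel at *; tauto

/-- the graph -/
def myG (n k : ℕ) : SimpleGraph (Fin n) where
  Adj x y := x ≠ y ∧ ¬ badRel k x.val y.val
  symm := by
    constructor
    rintro x y ⟨h1, h2⟩
    exact ⟨h1.symm, fun h => h2 (badRel_symm h)⟩
  loopless := by constructor; rintro x ⟨h, _⟩; exact h rfl

instance (n k : ℕ) : DecidableRel (myG n k).Adj := fun x y => by
  change Decidable (x ≠ y ∧ ¬ badRel k x.val y.val); infer_instance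

lemma myG_adj {n k : ℕ} (x y : Fin n) :
    (myG n k).Adj x y ↔ x ≠ y ∧ ¬ badRel k x.val y.val := Iff.rfl

lemma myG_compl_adj {n k : ℕ} (x y : Fin n) :
    (myG n k)ᶜ.Adj x y ↔ x ≠ y ∧ badRel k x.val y.val := by
  rw [SimpleGraph.compl_adj, myG_adj]
  constructor
  · rintro ⟨h1, h2⟩
    refine ⟨h1, ?_⟩
    by_contra hb
    exact h2 ⟨h1, hb⟩
  · rintro ⟨h1, h2⟩
    exact ⟨h1, fun h => h.2 h2⟩

lemma card_filter_fin (n : ℕ) (p : ℕ → Prop) [DecidablePred p] :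
    #(univ.filter (fun y : Fin n => p y.val)) = #((range n).filter p) := by
  apply Finset.card_bij (fun a _ => a.val)
  · intro a ha; simp only [mem_filter, mem_range]
    exact ⟨a.isLt, (mem_filter.mp ha).2⟩
  · intro a _ b _ h; exact Fin.ext h
  · intro b hb
    simp only [mem_filter, mem_range] at hb
    exact ⟨⟨b, hb.1⟩, by simp [hb.2], rfl⟩

lemma card_filter_fin_ge (n k : ℕ) :
    #(univ.filter (fun y : Fin n => k ≤ y.val)) = n - k := by
  rw [card_filter_fin]
  have : (range n).filter (fun y => k ≤ y) = Finset.Ico k n := by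
    ext a; simp only [mem_filter, mem_range, mem_Ico]; omega
  rw [this, Nat.card_Ico]

lemma card_filter_fin_lt (n k : ℕ) (h : k ≤ n) :
    #(univ.filter (fun y : Fin n => y.val < k)) = k := by
  rw [card_filter_fin n (fun y => y < k)]
  have : (range n).filter (fun y => y < k) = Finset.range k := by
    ext a; simp only [mem_filter, mem_range]; omega
  rw [this, card_range]

lemma compl_degree_zero (n k : ℕ) (hk : 3 ≤ k) (hn : k + 1 ≤ n) (h0 : 0 < n) :
    (myG n k)ᶜ.degree ⟨0, h0⟩ = n - k := by
  have h : (myG n k)ᶜ.neighborFinset ⟨0, h0⟩ = univ.filter (fun y : Fin n => k ≤ y.val) := by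
    ext y
    rw [SimpleGraph.mem_neighborFinset, myG_compl_adj]
    simp only [mem_filter, mem_univ, true_and, ne_eq, Fin.ext_iff, badRel]
    omega
  rw [SimpleGraph.degree, h, card_filter_fin_ge]

lemma compl_degree_ne_zero (n k : ℕ) (hk2 : k % 2 = 1) (hk : 3 ≤ k) (hn : k + 1 ≤ n)
    (v : Fin n) (hv : v.val ≠ 0) : (myG n k)ᶜ.degree v = 1 := by
  by_cases hvk : v.val < k
  · by_cases hodd : v.val % 2 = 1
    · have hpn : v.val + 1 < n := by omega
      have h : (myG n k)ᶜ.neighborFinset v = {⟨v.val + 1, hpn⟩} := by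
        ext y
        rw [SimpleGraph.mem_neighborFinset, myG_compl_adj]
        simp only [mem_singleton, ne_eq, Fin.ext_iff, badRel]
        omega
      rw [SimpleGraph.degree, h, card_singleton]
    · have hpn : v.val - 1 < n := by omega
      have h : (myG n k)ᶜ.neighborFinset v = {⟨v.val - 1, hpn⟩} := by
        ext y
        rw [SimpleGraph.mem_neighborFinset, myG_compl_adj]
        simp only [mem_singleton, ne_eq, Fin.ext_iff, badRel]
        omega
      rw [SimpleGraph.degree, h, card_singleton]
  · have h0 : 0 < n := by omega
    have h : (myG n k)ᶜ.neighborFinset v = {⟨0, h0⟩} := by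
      ext y
      rw [SimpleGraph.mem_neighborFinset, myG_compl_adj]
      simp only [mem_singleton, ne_eq, Fin.ext_iff, badRel]
      omega
    rw [SimpleGraph.degree, h, card_singleton]

lemma compl_sum_degrees (n k : ℕ) (hk2 : k % 2 = 1) (hk : 3 ≤ k) (hn : k + 1 ≤ n) :
    ∑ v : Fin n, (myG n k)ᶜ.degree v = (n - k) + (n - 1) := by
  have h0 : 0 < n := by omega
  rw [← Finset.add_sum_erase univ _ (mem_univ (⟨0, h0⟩ : Fin n))]
  congr 1
  · exact compl_degree_zero n k hk hn h0
  · rw [Finset.sum_congr rfl (fun v hv => compl_degree_ne_zero n k hk2 hk hn v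
      (by simpa [Fin.ext_iff] using (Finset.mem_erase.mp hv).1))]
    rw [Finset.sum_const, smul_eq_mul, mul_one, Finset.card_erase_of_mem (mem_univ _),
      Finset.card_univ, Fintype.card_fin]

lemma compl_twice_edges (n k : ℕ) (hk2 : k % 2 = 1) (hk : 3 ≤ k) (hn : k + 1 ≤ n) :
    2 * #((myG n k)ᶜ.edgeFinset) = (n - k) + (n - 1) := by
  rw [← SimpleGraph.sum_degrees_eq_twice_card_edges]
  exact compl_sum_degrees n k hk2 hk hn

lemma G_degree (n k : ℕ) (hk2 : k % 2 = 1) (hk : 3 ≤ k) (hn : k + 1 ≤ n) (v : Fin n) :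
    (myG n k).degree v = if v.val = 0 then k - 1 else n - 2 := by
  have hc := SimpleGraph.degree_compl (G := myG n k) (v := v)
  rw [Fintype.card_fin] at hc
  have hlt := SimpleGraph.degree_lt_card_verts (G := myG n k) v
  rw [Fintype.card_fin] at hlt
  by_cases hv : v.val = 0
  · have h0 : 0 < n := by omega
    have : v = ⟨0, h0⟩ := Fin.ext hv
    subst this
    rw [compl_degree_zero n k hk hn h0] at hc
    rw [if_pos rfl]
    omega
  · rw [compl_degree_ne_zero n k hk2 hk hn v hv] at hc
    rw [if_neg hv]
    omega

lemma G_twice_edges (n k : ℕ) (hk2 : k % 2 = 1) (hk : 3 ≤ k) (hn : k + 1 ≤ n) :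
    2 * #((myG n k).edgeFinset) = (k - 1) + (n - 1) * (n - 2) := by
  rw [← SimpleGraph.sum_degrees_eq_twice_card_edges]
  have h0 : 0 < n := by omega
  rw [Finset.sum_congr rfl (fun v _ => G_degree n k hk2 hk hn v)]
  rw [← Finset.add_sum_erase univ _ (mem_univ (⟨0, h0⟩ : Fin n))]
  congr 1
  rw [Finset.sum_congr rfl (fun v hv => if_neg
    (by simpa [Fin.ext_iff] using (Finset.mem_erase.mp hv).1))]
  rw [Finset.sum_const, smul_eq_mul, Finset.card_erase_of_mem (mem_univ _),
    Finset.card_univ, Fintype.card_fin]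

/-- If `k ≥ 3` divides `s² - s - 1` for some positive integer `s`, then for
`n = s(k-1) + 2` there is a `K_k`-divisible graph `G` of order `n` whose complement
has exactly `n - (k+1)/2` edges and which has no `K_k`-decomposition. -/
theorem nondecomposable_graph_exists (k s : ℕ) (hk : 3 ≤ k) (hs : 1 ≤ s)
    (hdvd : (k : ℤ) ∣ ((s : ℤ) ^ 2 - (s : ℤ) - 1)) :
    ∃ G : SimpleGraph (Fin (s * (k - 1) + 2)), KkDivisible k G ∧
      ((Gᶜ.edgeSet.ncard : ℚ) = ((s * (k - 1) + 2 : ℕ) : ℚ) - ((k : ℚ) + 1) / 2) ∧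
      ¬ HasKkDecomposition k G := by
  have hmul : 1 * (k - 1) ≤ s * (k - 1) := Nat.mul_le_mul_right _ hs
  have hnk : k + 1 ≤ s * (k - 1) + 2 := by omega
  obtain ⟨t, ht⟩ := hdvd
  have hk2 : k % 2 = 1 := by
    rcases Nat.even_or_odd k with he | ho
    · exfalso
      obtain ⟨u, hu⟩ := he
      obtain ⟨w, hw⟩ := Int.even_mul_succ_self ((s : ℤ) - 1)
      have hk' : (k : ℤ) = 2 * u := by exact_mod_cast (by omega : k = 2 * u)
      have h2 : 2 * w - 1 = 2 * ((u : ℤ) * t) := by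
        linear_combination -hw + ht + t * hk'
      obtain ⟨z, hz⟩ : ∃ z : ℤ, (u : ℤ) * t = z := ⟨_, rfl⟩
      rw [hz] at h2
      omega
    · exact Nat.odd_iff.mp ho
  have hs2 : 2 ≤ s := by
    by_contra h
    have hs1 : s = 1 := by omega
    subst hs1
    have hneg : ((1 : ℕ) : ℤ) ^ 2 - ((1 : ℕ) : ℤ) - 1 = -1 := by norm_num
    rw [hneg] at ht
    have hdvd1 : (k : ℤ) ∣ -1 := ⟨t, ht⟩
    have hle := Int.le_of_dvd one_pos (dvd_neg.mp hdvd1)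
    have : (3 : ℤ) ≤ (k : ℤ) := by exact_mod_cast hk
    omega
  refine ⟨myG (s * (k - 1) + 2) k, ⟨?_, ?_⟩, ?_, ?_⟩
  · -- edge divisibility
    have hE := G_twice_edges (s * (k - 1) + 2) k hk2 hk hnk
    have htpos : 0 < t := by
      rcases le_or_gt t 0 with h | h
      · exfalso
        have h1 : (k : ℤ) * t ≤ 0 := mul_nonpos_of_nonneg_of_nonpos (by positivity) h
        have hscast : (2 : ℤ) ≤ (s : ℤ) := by exact_mod_cast hs2
        have h2 : 0 < (s : ℤ) ^ 2 - s - 1 := by nlinarith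
        rw [ht] at h2
        linarith
      · exact h
    have h3k : (3 : ℤ) ≤ (k : ℤ) := by exact_mod_cast hk
    have hscast : (2 : ℤ) ≤ (s : ℤ) := by exact_mod_cast hs2
    have hM : 0 ≤ (s : ℤ) ^ 2 - t := by
      nlinarith [mul_le_mul_of_nonneg_right h3k (le_of_lt htpos)]
    obtain ⟨c, hc⟩ : ∃ c, k - 1 = 2 * c := ⟨(k - 1) / 2, by omega⟩
    have hc' : (2 : ℤ) * (c : ℤ) = (k : ℤ) - 1 := by omega
    have hEZ : 2 * (#((myG (s * (k - 1) + 2) k).edgeFinset) : ℤ) =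
        ((k : ℤ) - 1) + ((s : ℤ) * ((k : ℤ) - 1) + 1) * ((s : ℤ) * ((k : ℤ) - 1)) := by
      have := hE
      zify [Nat.one_le_iff_ne_zero.mpr, (by omega : 1 ≤ k),
        (by omega : 1 ≤ s * (k - 1) + 2), (by omega : 2 ≤ s * (k - 1) + 2)] at this
      push_cast at this
      linarith
    have h2E : 2 * (#((myG (s * (k - 1) + 2) k).edgeFinset) : ℤ) =
        2 * ((k : ℤ) * (c : ℤ) * ((s : ℤ) ^ 2 - t)) := by
      linear_combination hEZ - ((k : ℤ) * ((s : ℤ) ^ 2 - t)) * hc' - ((k : ℤ) - 1) * ht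
    have hEcancel : (#((myG (s * (k - 1) + 2) k).edgeFinset) : ℤ) =
        (k : ℤ) * (c : ℤ) * ((s : ℤ) ^ 2 - t) :=
      mul_left_cancel₀ two_ne_zero h2E
    have hq : k * (k - 1) / 2 = k * c := by
      rw [Nat.mul_div_assoc k ⟨c, hc⟩]
      congr 1
      omega
    have hedgeset : (myG (s * (k - 1) + 2) k).edgeSet.ncard
        = #((myG (s * (k - 1) + 2) k).edgeFinset) := by
      rw [← SimpleGraph.coe_edgeFinset, Set.ncard_coe_finset]
    rw [hedgeset, hq]
    refine ⟨((s : ℤ) ^ 2 - t).toNat, ?_⟩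
    have hfin : ((k * c * ((s : ℤ) ^ 2 - t).toNat : ℕ) : ℤ)
        = (#((myG (s * (k - 1) + 2) k).edgeFinset) : ℤ) := by
      push_cast [Int.toNat_of_nonneg hM]
      linarith [hEcancel]
    exact (Nat.cast_inj.mp hfin).symm
  · -- degree divisibility
    intro x
    have hx : ((myG (s * (k - 1) + 2) k).neighborSet x).ncard
        = (myG (s * (k - 1) + 2) k).degree x := by
      have hcoe : ((myG (s * (k - 1) + 2) k).neighborFinset x : Set (Fin (s * (k - 1) + 2)))
          = (myG (s * (k - 1) + 2) k).neighborSet x := by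
        rw [SimpleGraph.neighborFinset_def, Set.coe_toFinset]
      rw [SimpleGraph.degree, ← Set.ncard_coe_finset, hcoe]
    rw [hx, G_degree _ _ hk2 hk hnk x]
    split_ifs
    · exact dvd_refl _
    · rw [Nat.add_sub_cancel]
      exact dvd_mul_left (k - 1) s
  · -- complement edge count
    have h2 := compl_twice_edges (s * (k - 1) + 2) k hk2 hk hnk
    have hedgeset : (myG (s * (k - 1) + 2) k)ᶜ.edgeSet.ncard
        = #((myG (s * (k - 1) + 2) k)ᶜ.edgeFinset) := by
      rw [← SimpleGraph.coe_edgeFinset, Set.ncard_coe_finset]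
    rw [hedgeset]
    have hQ : 2 * ((#((myG (s * (k - 1) + 2) k)ᶜ.edgeFinset)) : ℚ) =
        (((s : ℚ) * ((k : ℚ) - 1) + 2) - (k : ℚ)) + ((s : ℚ) * ((k : ℚ) - 1) + 1) := by
      qify [(by omega : k ≤ s * (k - 1) + 2), (by omega : 1 ≤ s * (k - 1) + 2),
        (by omega : 1 ≤ k)] at h2
      push_cast at h2
      linarith
    push_cast [Nat.cast_sub (by omega : 1 ≤ k)]
    linarith
  · -- no decomposition
    rintro ⟨D, hD1, hD2⟩
    have h0n : 0 < s * (k - 1) + 2 := by omega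
    have h1n : 1 < s * (k - 1) + 2 := by omega
    have h2n : 2 < s * (k - 1) + 2 := by omega
    set n := s * (k - 1) + 2 with hn
    have hadj : (myG n k).Adj ⟨0, h0n⟩ ⟨1, h1n⟩ := by
      constructor
      · intro h
        have := congrArg Fin.val h
        simp at this
      · intro hb
        have hb' : badRel k 0 1 := hb
        simp only [badRel] at hb'
        omega
    obtain ⟨A, ⟨hAD, hA0, hA1⟩, -⟩ := hD2 ⟨0, h0n⟩ ⟨1, h1n⟩ hadj
    obtain ⟨hAcard, hAclique⟩ := hD1 A hAD
    have hsub : A ⊆ univ.filter (fun y : Fin n => y.val < k) := by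
      intro a ha
      simp only [mem_filter, mem_univ, true_and]
      by_cases h : a = ⟨0, h0n⟩
      · subst h
        show (0 : ℕ) < k
        omega
      · have hadj0 := hAclique ⟨0, h0n⟩ hA0 a ha (fun he => h he.symm)
        have hnb : ¬ badRel k 0 a.val := hadj0.2
        simp only [badRel] at hnb
        simp at hnb
        omega
    have hAeq : A = univ.filter (fun y : Fin n => y.val < k) :=
      Finset.eq_of_subset_of_card_le hsub
        (by rw [card_filter_fin_lt n k (by omega), hAcard])
    have h1A : (⟨1, h1n⟩ : Fin n) ∈ A := by
      rw [hAeq]; simp only [mem_filter, mem_univ, true_and]; omega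
    have h2A : (⟨2, h2n⟩ : Fin n) ∈ A := by
      rw [hAeq]; simp only [mem_filter, mem_univ, true_and]; omega
    have hne : (⟨1, h1n⟩ : Fin n) ≠ ⟨2, h2n⟩ := by
      intro h
      have := congrArg Fin.val h
      simp at this
    have hadj12 := hAclique ⟨1, h1n⟩ h1A ⟨2, h2n⟩ h2A hne
    exact hadj12.2 (show badRel k 1 2 from
      Or.inr (Or.inr (Or.inl ⟨rfl, rfl, by omega⟩)))
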